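/- Let p ≥ 1, t ∈ (1,2], and let n be a positive integer. Then Γ_{⌊t^n⌋}(Kₙ^{p*}) ≤ (n/(n + k(n,t)))^{1/p} ≤ (n/(n + ⌊a(t)·n⌋))^{1/p}. -/

import Mathlib

open Real Set Pointwise

/-- The covering functional `Γ_m(K)`: the infimum of all `γ > 0` such that `K` can be
covered by `m` translates of `γ • K`. -/
noncomputable def coveringFunctional {n : ℕ} (m : ℕ) (K : Set (Fin n → ℝ)) : ℝ :=
  sInf {γ : ℝ | 0 < γ ∧ ∃ C : Set (Fin n → ℝ), C.Finite ∧ C.ncard = m ∧ K ⊆ C + γ • K}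

/-- `Kₙ^{p*}`: the portion of the `ℓ_p` unit ball in the nonnegative orthant. -/
noncomputable def Kpstar (n : ℕ) (p : ℝ) : Set (Fin n → ℝ) :=
  {x | (∑ i, x i ^ p) ≤ 1 ∧ ∀ i, 0 ≤ x i}

/-- `f x = (1+x)^(1+x) / x^x` (real powers). -/
noncomputable def f (x : ℝ) : ℝ := (1 + x) ^ (1 + x) / x ^ x

lemma rpow_superadd {a b p : ℝ} (ha : 0 ≤ a) (hb : 0 ≤ b) (hp : 1 ≤ p) :
    a ^ p + b ^ p ≤ (a + b) ^ p := by
  have h := NNReal.add_rpow_le_rpow_add a.toNNReal b.toNNReal hp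
  have h2 := NNReal.coe_le_coe.2 h
  push_cast [NNReal.coe_rpow] at h2
  simpa [Real.coe_toNNReal a ha, Real.coe_toNNReal b hb] using h2



noncomputable def gaux (x : ℝ) : ℝ := Real.log (1 + x) * (1 + x) - Real.log x * x

lemma f_eq_exp {x : ℝ} (hx : 0 < x) : f x = Real.exp (gaux x) := by
  rw [f, gaux, Real.rpow_def_of_pos (by linarith), Real.rpow_def_of_pos hx, ← Real.exp_sub]

lemma gaux_hasDeriv {x : ℝ} (hx : 0 < x) :
    HasDerivAt gaux (Real.log (1 + x) - Real.log x) x := by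
  have h1 : HasDerivAt (fun u : ℝ => (1 + u) * Real.log (1 + u)) (Real.log (1 + x) + 1) x := by
    have h0 : HasDerivAt (fun u : ℝ => u * Real.log u) (Real.log (1 + x) + 1) (1 + x) :=
      Real.hasDerivAt_mul_log (by positivity)
    have h2 : HasDerivAt (fun u : ℝ => 1 + u) 1 x := (hasDerivAt_id x).const_add 1
    simpa [Function.comp_def] using h0.comp x h2
  have h3 : HasDerivAt (fun u : ℝ => u * Real.log u) (Real.log x + 1) x :=
    Real.hasDerivAt_mul_log hx.ne'
  have := h1.sub h3
  have heq : (Real.log (1 + x) + 1) - (Real.log x + 1) = Real.log (1 + x) - Real.log x := by ring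
  rw [heq] at this
  have hg : gaux = (fun u => (1 + u) * Real.log (1 + u)) - fun u => u * Real.log u := by
    funext u; simp [gaux, mul_comm]
  rw [hg]; exact this

lemma f_mono {x y : ℝ} (hx : 0 < x) (hxy : x ≤ y) : f x ≤ f y := by
  have hmono : StrictMonoOn gaux (Set.Ioi (0:ℝ)) := by
    apply strictMonoOn_of_deriv_pos (convex_Ioi 0)
    · intro u hu
      exact (gaux_hasDeriv hu).continuousAt.continuousWithinAt
    · intro u hu
      rw [interior_Ioi] at hu
      rw [(gaux_hasDeriv hu).deriv]
      have : Real.log u < Real.log (1 + u) := Real.log_lt_log hu (by linarith)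
      linarith
  rcases eq_or_lt_of_le hxy with rfl | hlt
  · exact le_refl _
  · rw [f_eq_exp hx, f_eq_exp (hx.trans hlt)]
    exact (Real.exp_le_exp.2 (hmono hx (hx.trans hlt) hlt).le)


lemma choose_mul_le_pow (n m : ℕ) :
    (n + m).choose n * (n ^ n * m ^ m) ≤ (n + m) ^ (n + m) := by
  have h := add_pow n m (n + m)   -- (n+m)^(n+m) = ∑ ...
  calc (n + m).choose n * (n ^ n * m ^ m)
      = n ^ n * m ^ ((n + m) - n) * (n + m).choose n := by
        rw [Nat.add_sub_cancel_left]; ring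
    _ ≤ ∑ j ∈ Finset.range (n + m + 1), n ^ j * m ^ ((n + m) - j) * (n + m).choose j := by
        exact Finset.single_le_sum (f := fun j => n ^ j * m ^ ((n + m) - j) * (n + m).choose j)
          (fun j _ => Nat.zero_le _) (by simp [Nat.lt_succ_iff])
    _ = (n + m) ^ (n + m) := (add_pow n m (n + m)).symm

lemma choose_le_f_pow {n m : ℕ} (hn : 0 < n) (hm : 0 < m) :
    ((n + m).choose n : ℝ) ≤ f ((m : ℝ) / n) ^ n := by
  have hn' : (0:ℝ) < n := by exact_mod_cast hn
  have hm' : (0:ℝ) < m := by exact_mod_cast hm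
  set x : ℝ := (m : ℝ) / n with hxdef
  have hx : 0 < x := by positivity
  have h1x : (0:ℝ) ≤ 1 + x := by linarith
  have hfx : f x ^ n = ((n:ℝ) + m) ^ (n + m) / ((n:ℝ) ^ (n+m) ) / ((m:ℝ) ^ m / (n:ℝ) ^ m) := by
    have e1 : ((1 + x) ^ (1 + x)) ^ (n:ℕ) = (1 + x) ^ ((1 + x) * n) := by
      rw [← Real.rpow_natCast ((1+x) ^ (1+x)) n, ← Real.rpow_mul h1x]
    have e2 : (x ^ x) ^ (n:ℕ) = x ^ (x * n) := by
      rw [← Real.rpow_natCast (x ^ x) n, ← Real.rpow_mul hx.le]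
    have hxn : x * (n:ℝ) = (m:ℕ) := by
      rw [hxdef]; field_simp
    have h1xn : (1 + x) * (n:ℝ) = ((n + m : ℕ) : ℝ) := by
      push_cast; rw [hxdef]; field_simp
    have h1xval : 1 + x = ((n:ℝ) + m) / n := by rw [hxdef]; field_simp
    rw [f, div_pow, e1, e2, hxn, h1xn, Real.rpow_natCast, Real.rpow_natCast,
      h1xval, hxdef, div_pow, div_pow]
  rw [hfx]
  rw [le_div_iff₀ (by positivity), le_div_iff₀ (by positivity)]
  have := choose_mul_le_pow n m
  have hcast : ((n + m).choose n : ℝ) * ((n:ℝ) ^ n * (m:ℝ) ^ m) ≤ ((n:ℝ) + m) ^ (n + m) := by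
    exact_mod_cast this
  calc ((n + m).choose n : ℝ) * ((m:ℝ) ^ m / (n:ℝ) ^ m) * (n:ℝ) ^ (n + m)
      = ((n + m).choose n : ℝ) * ((n:ℝ) ^ n * (m:ℝ) ^ m) := by
        rw [pow_add]; field_simp
    _ ≤ ((n:ℝ) + m) ^ (n + m) := hcast

lemma multiset_card_sum {ι α : Type*} (s : Finset ι) (g : ι → Multiset α) :
    Multiset.card (∑ i ∈ s, g i) = ∑ i ∈ s, Multiset.card (g i) := by
  classical
  induction s using Finset.induction with
  | empty => simp
  | insert a t ha ih => rw [Finset.sum_insert ha, Finset.sum_insert ha,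
      Multiset.card_add, ih]

lemma exists_pointwise_le_sum_eq {ι : Type*} [DecidableEq ι] (t : Finset ι) (g : ι → ℕ) :
    ∀ s ≤ ∑ i ∈ t, g i, ∃ v : ι → ℕ, (∀ i, v i ≤ g i) ∧ ∑ i ∈ t, v i = s := by
  induction t using Finset.induction with
  | empty =>
      intro s hs
      simp only [Finset.sum_empty, Nat.le_zero] at hs
      exact ⟨fun _ => 0, fun _ => Nat.zero_le _, by simp [hs]⟩
  | insert a t' ha ih =>
      intro s hs
      rw [Finset.sum_insert ha] at hs
      obtain ⟨v, hv, hsum⟩ := ih (s - min s (g a)) (by omega)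
      refine ⟨Function.update v a (min s (g a)), ?_, ?_⟩
      · intro i
        by_cases hia : i = a
        · subst hia; simp
        · simp [Function.update_of_ne hia, hv i]
      · rw [Finset.sum_insert ha, Function.update_self,
          Finset.sum_congr rfl (fun i hi => Function.update_of_ne (ne_of_mem_of_not_mem hi ha) _ _),
          hsum]
        omega


def msum (n k : ℕ) (v : Fin n → ℕ) : Multiset (Fin (n+1)) :=
  (∑ i : Fin n, (v i) • ({Fin.castSucc i} : Multiset (Fin (n+1)))) + (k - ∑ i, v i) • {Fin.last n}

lemma card_msum {n k : ℕ} (v : Fin n → ℕ) (hv : ∑ i, v i ≤ k) :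
    Multiset.card (msum n k v) = k := by
  rw [msum, Multiset.card_add, multiset_card_sum]
  simp only [Multiset.card_nsmul, Multiset.card_singleton, mul_one]
  omega

lemma count_msum {n k : ℕ} (v : Fin n → ℕ) (i : Fin n) :
    Multiset.count (Fin.castSucc i) (msum n k v) = v i := by
  rw [msum, Multiset.count_add, Multiset.count_sum']
  simp [Multiset.count_nsmul, Multiset.count_singleton, Fin.castSucc_inj,
    (Fin.castSucc_lt_last i).ne, Finset.sum_ite_eq]

lemma ncard_sum_le {n k : ℕ} :
    {v : Fin n → ℕ | ∑ i, v i ≤ k}.ncard ≤ (n + k).choose n := by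
  classical
  rw [← Nat.card_coe_set_eq]
  have key : Nat.card {v : Fin n → ℕ // ∑ i, v i ≤ k} ≤ Nat.card (Sym (Fin (n+1)) k) := by
    haveI : Finite (Sym (Fin (n+1)) k) := Finite.of_fintype _
    refine Nat.card_le_card_of_injective
      (fun w : {v : Fin n → ℕ // ∑ i, v i ≤ k} =>
        (⟨msum n k w.1, card_msum w.1 w.2⟩ : Sym (Fin (n+1)) k)) ?_
    intro w w' hww
    have h0 : msum n k w.1 = msum n k w'.1 := congrArg Subtype.val hww
    refine Subtype.ext (funext fun i => ?_)
    rw [← count_msum (k := k) w.1 i, ← count_msum (k := k) w'.1 i, h0]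
  calc Nat.card {v : Fin n → ℕ // ∑ i, v i ≤ k} ≤ Nat.card (Sym (Fin (n+1)) k) := key
    _ = Fintype.card (Sym (Fin (n+1)) k) := Nat.card_eq_fintype_card
    _ = (n + k).choose k := by
        rw [Sym.card_sym_eq_choose]
        congr 1
        simp [Fintype.card_fin]
    _ = (n + k).choose n := (Nat.choose_symm_add (a := n) (b := k)).symm

/-- The candidate translate set. -/
noncomputable def C0 (n k : ℕ) (p : ℝ) : Set (Fin n → ℝ) :=
  (fun v : Fin n → ℕ => fun i => ((v i : ℝ) / ((n : ℝ) + k)) ^ (1 / p)) ''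
    {v : Fin n → ℕ | ∑ i, v i ≤ k}

lemma cover_main {n k : ℕ} {p : ℝ} (hp : 1 ≤ p) (hn : 0 < n) :
    Kpstar n p ⊆ C0 n k p + ((((n : ℝ) / ((n : ℝ) + k)) ^ (1 / p)) • Kpstar n p) := by
  classical
  have hp0 : 0 < p := by linarith
  have hn' : (0:ℝ) < n := by exact_mod_cast hn
  set Nr : ℝ := (n : ℝ) + k with hNrdef
  have hNr : 0 < Nr := by positivity
  set β : ℝ := ((n : ℝ) / Nr) ^ (1 / p) with hβdef
  have hβpos : 0 < β := Real.rpow_pos_of_pos (by positivity) _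
  have hβp : β ^ p = (n : ℝ) / Nr := by
    rw [hβdef, ← Real.rpow_mul (by positivity), one_div_mul_cancel hp0.ne', Real.rpow_one]
  intro x hx
  obtain ⟨hx1, hx0⟩ := hx
  set y : Fin n → ℝ := fun i => x i ^ p with hydef
  have hy0 : ∀ i, 0 ≤ y i := fun i => Real.rpow_nonneg (hx0 i) p
  set g : Fin n → ℕ := fun i => ⌊Nr * y i⌋₊ with hgdef
  obtain ⟨v, hvg, hvsum⟩ :=
    exists_pointwise_le_sum_eq Finset.univ g (min (∑ i, g i) k) (min_le_left _ _)
  have hvk : ∑ i, v i ≤ k := hvsum ▸ min_le_right _ _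
  set c : Fin n → ℝ := fun i => ((v i : ℝ) / Nr) ^ (1 / p) with hcdef
  have hw0 : ∀ i, (0:ℝ) ≤ (v i : ℝ) / Nr := fun i => by positivity
  have hwy : ∀ i, (v i : ℝ) / Nr ≤ y i := by
    intro i
    rw [div_le_iff₀ hNr]
    calc (v i : ℝ) ≤ (g i : ℝ) := by exact_mod_cast hvg i
      _ ≤ Nr * y i := Nat.floor_le (mul_nonneg hNr.le (hy0 i))
      _ = y i * Nr := mul_comm _ _
  have hc0 : ∀ i, 0 ≤ c i := fun i => Real.rpow_nonneg (hw0 i) _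
  have hcx : ∀ i, c i ≤ x i := by
    intro i
    have h1 : ((v i : ℝ) / Nr) ^ (1 / p) ≤ (y i) ^ (1 / p) :=
      Real.rpow_le_rpow (hw0 i) (hwy i) (by positivity)
    have h2 : (y i) ^ (1 / p) = x i := by
      rw [hydef]
      show (x i ^ p) ^ (1/p) = x i
      rw [← Real.rpow_mul (hx0 i), mul_one_div, div_self hp0.ne', Real.rpow_one]
    rw [hcdef]
    calc ((v i : ℝ) / Nr) ^ (1 / p) ≤ (y i) ^ (1 / p) := h1
      _ = x i := h2
  have hcp : ∀ i, c i ^ p = (v i : ℝ) / Nr := by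
    intro i
    rw [hcdef]
    show (((v i : ℝ) / Nr) ^ (1/p)) ^ p = (v i : ℝ) / Nr
    rw [← Real.rpow_mul (hw0 i), one_div_mul_cancel hp0.ne', Real.rpow_one]
  have hzp : ∀ i, (x i - c i) ^ p ≤ y i - (v i : ℝ) / Nr := by
    intro i
    have hsupp : (x i - c i) ^ p + (c i) ^ p ≤ ((x i - c i) + c i) ^ p :=
      rpow_superadd (sub_nonneg.2 (hcx i)) (hc0 i) hp
    rw [sub_add_cancel] at hsupp
    have hyi : y i = x i ^ p := rfl
    have := hcp i
    linarith
  have hsum : ∑ i, (x i - c i) ^ p ≤ (n : ℝ) / Nr := by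
    have h1 : ∑ i, (x i - c i) ^ p ≤ ∑ i, (y i - (v i : ℝ) / Nr) :=
      Finset.sum_le_sum (fun i _ => hzp i)
    have h2 : ∑ i, (y i - (v i : ℝ) / Nr) = ∑ i, y i - (∑ i, (v i : ℝ)) / Nr := by
      rw [Finset.sum_sub_distrib, Finset.sum_div]
    have hy1 : ∑ i, y i ≤ 1 := hx1
    rcases le_or_gt k (∑ i, g i) with hcase | hcase
    · have hsv : (∑ i, (v i : ℝ)) = (k : ℝ) := by
        have : ∑ i, v i = k := by rw [hvsum]; exact min_eq_right hcase
        exact_mod_cast this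
      have hend : (1 : ℝ) - (k : ℝ) / Nr = (n : ℝ) / Nr := by
        field_simp
        rw [hNrdef]
        ring
      calc ∑ i, (x i - c i) ^ p ≤ ∑ i, y i - (∑ i, (v i : ℝ)) / Nr := h1.trans (le_of_eq h2)
        _ = ∑ i, y i - (k : ℝ) / Nr := by rw [hsv]
        _ ≤ 1 - (k : ℝ) / Nr := by linarith
        _ = (n : ℝ) / Nr := hend
    · have hsv : (∑ i, (v i : ℝ)) = ∑ i, (g i : ℝ) := by
        have : ∑ i, v i = ∑ i, g i := by rw [hvsum]; exact min_eq_left hcase.le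
        exact_mod_cast this
      have h3 : ∀ i, y i - (g i : ℝ) / Nr ≤ 1 / Nr := by
        intro i
        have h4 : Nr * y i < (g i : ℝ) + 1 := by
          have := Nat.lt_floor_add_one (Nr * y i)
          exact_mod_cast this
        rw [sub_le_iff_le_add, ← add_div, le_div_iff₀ hNr]
        calc y i * Nr = Nr * y i := mul_comm _ _
          _ ≤ 1 + (g i : ℝ) := by linarith
      calc ∑ i, (x i - c i) ^ p ≤ ∑ i, y i - (∑ i, (v i : ℝ)) / Nr := h1.trans (le_of_eq h2)
        _ = ∑ i, y i - (∑ i, (g i : ℝ)) / Nr := by rw [hsv]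
        _ = ∑ i, (y i - (g i : ℝ) / Nr) := by
            rw [Finset.sum_sub_distrib, Finset.sum_div]
        _ ≤ ∑ _i : Fin n, 1 / Nr := Finset.sum_le_sum (fun i _ => h3 i)
        _ = (n : ℝ) / Nr := by
            rw [Finset.sum_const, Finset.card_univ, Fintype.card_fin, nsmul_eq_mul]
            ring
  refine Set.mem_add.2 ⟨c, ?_, x - c, ?_, ?_⟩
  · exact ⟨v, hvk, rfl⟩
  · rw [Set.mem_smul_set_iff_inv_smul_mem₀ hβpos.ne']
    refine ⟨?_, ?_⟩
    · have hterm : ∀ i, ((β⁻¹ • (x - c)) i) ^ p = β⁻¹ ^ p * (x i - c i) ^ p := by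
        intro i
        have : (β⁻¹ • (x - c)) i = β⁻¹ * (x i - c i) := rfl
        rw [this, Real.mul_rpow (inv_nonneg.2 hβpos.le) (sub_nonneg.2 (hcx i))]
      calc ∑ i, ((β⁻¹ • (x - c)) i) ^ p = ∑ i, β⁻¹ ^ p * (x i - c i) ^ p :=
            Finset.sum_congr rfl (fun i _ => hterm i)
        _ = β⁻¹ ^ p * ∑ i, (x i - c i) ^ p := by rw [Finset.mul_sum]
        _ ≤ β⁻¹ ^ p * ((n : ℝ) / Nr) := by
            apply mul_le_mul_of_nonneg_left hsum
            exact Real.rpow_nonneg (inv_nonneg.2 hβpos.le) _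
        _ = 1 := by
            rw [Real.inv_rpow hβpos.le, hβp]
            field_simp
    · intro i
      have : (β⁻¹ • (x - c)) i = β⁻¹ * (x i - c i) := rfl
      rw [this]
      exact mul_nonneg (inv_nonneg.2 hβpos.le) (sub_nonneg.2 (hcx i))
  · funext i
    show c i + (x i - c i) = x i
    ring

/-- Let `p ≥ 1`, `t ∈ (1,2]`, `n` a positive integer, `a = a(t)` the positive solution
of `f a = t`, and `k = k(n,t)` the nonnegative integer with
`C(n+k,n) ≤ t^n < C(n+k+1,n)`. Then
`Γ_{⌊t^n⌋}(Kₙ^{p*}) ≤ (n/(n+k))^(1/p) ≤ (n/(n+⌊a·n⌋))^(1/p)`. -/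
theorem coveringFunctional_Kpstar_le (p : ℝ) (hp : 1 ≤ p)
    (t : ℝ) (ht1 : 1 < t) (ht2 : t ≤ 2) (n : ℕ) (hn : 0 < n)
    (a : ℝ) (ha : 0 < a) (hfa : f a = t)
    (k : ℕ) (hk1 : ((n + k).choose n : ℝ) ≤ t ^ n)
    (hk2 : t ^ n < ((n + k + 1).choose n : ℝ)) :
    coveringFunctional ⌊t ^ n⌋₊ (Kpstar n p) ≤ ((n : ℝ) / ((n : ℝ) + k)) ^ (1 / p) ∧
      ((n : ℝ) / ((n : ℝ) + k)) ^ (1 / p) ≤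
        ((n : ℝ) / ((n : ℝ) + (⌊a * (n : ℝ)⌋₊ : ℝ))) ^ (1 / p) := by
  have hp0 : 0 < p := by linarith
  have hn' : (0:ℝ) < n := by exact_mod_cast hn
  constructor
  · -- Part 1: covering bound
    apply csInf_le ⟨0, fun γ hγ => hγ.1.le⟩
    have hβpos : 0 < ((n : ℝ) / ((n : ℝ) + k)) ^ (1 / p) :=
      Real.rpow_pos_of_pos (by positivity) _
    -- cardinality of the translate set
    have hVfin : {v : Fin n → ℕ | ∑ i, v i ≤ k}.Finite := by
      apply (Set.Finite.pi (fun _ : Fin n => Set.finite_Iic k)).subset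
      intro v hv i _
      exact le_trans (Finset.single_le_sum (f := fun j => v j)
        (fun _ _ => Nat.zero_le _) (Finset.mem_univ i)) hv
    have hC0fin : (C0 n k p).Finite := hVfin.image _
    have hmfloor : (n + k).choose n ≤ ⌊t ^ n⌋₊ := Nat.le_floor hk1
    have hC0card : (C0 n k p).ncard ≤ ⌊t ^ n⌋₊ :=
      le_trans (le_trans (Set.ncard_image_le hVfin) ncard_sum_le) hmfloor
    haveI : Nonempty (Fin n) := ⟨⟨0, hn⟩⟩
    obtain ⟨C, hsub, -, hCcard⟩ :=
      (Set.infinite_univ (α := Fin n → ℝ)).exists_superset_ncard_eq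
        (Set.subset_univ _) hC0fin hC0card
    have hm1 : 1 ≤ ⌊t ^ n⌋₊ := Nat.le_floor (by exact_mod_cast one_le_pow₀ ht1.le)
    have hCfin : C.Finite := Set.finite_of_ncard_ne_zero (by rw [hCcard]; omega)
    exact ⟨hβpos, C, hCfin, hCcard,
      (cover_main hp hn).trans (Set.add_subset_add_right hsub)⟩
  · -- Part 2
    set M := ⌊a * (n : ℝ)⌋₊ with hMdef
    have hMk : M ≤ k := by
      by_contra hlt
      push_neg at hlt
      have hM0 : 0 < M := by omega
      have hM0' : (0:ℝ) < M := by exact_mod_cast hM0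
      have hMa : (M : ℝ) ≤ a * n := Nat.floor_le (by positivity)
      have hdiva : (M : ℝ) / n ≤ a := by
        rw [div_le_iff₀ hn']
        linarith
      have hdivpos : (0:ℝ) < (M : ℝ) / n := by positivity
      have h1 : (n + k + 1).choose n ≤ (n + M).choose n :=
        Nat.choose_le_choose n (by omega)
      have h2 : ((n + M).choose n : ℝ) ≤ f ((M : ℝ) / n) ^ n :=
        choose_le_f_pow hn hM0
      have hfpos : 0 < f ((M : ℝ) / n) := by
        rw [f_eq_exp hdivpos]; exact Real.exp_pos _
      have h3 : f ((M : ℝ) / n) ^ n ≤ f a ^ n :=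
        pow_le_pow_left₀ hfpos.le (f_mono hdivpos hdiva) n
      have h4 : ((n + k + 1).choose n : ℝ) ≤ t ^ n := by
        calc ((n + k + 1).choose n : ℝ) ≤ ((n + M).choose n : ℝ) := by exact_mod_cast h1
          _ ≤ f ((M : ℝ) / n) ^ n := h2
          _ ≤ f a ^ n := h3
          _ = t ^ n := by rw [hfa]
      linarith
    have hMk' : ((M : ℕ) : ℝ) ≤ (k : ℝ) := by exact_mod_cast hMk
    have hbase : (n : ℝ) / ((n : ℝ) + (k : ℝ)) ≤ (n : ℝ) / ((n : ℝ) + (M : ℝ)) := by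
      rw [div_le_div_iff₀ (by positivity) (by positivity)]
      nlinarith
    exact Real.rpow_le_rpow (by positivity) hbase (one_div_nonneg.2 hp0.le)
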